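/- Assume in addition 0 ≤ t₀ < t₁ ≤ T. For every τ ∈ ℝ there exists a constant C > 0, depending only on τ, T, λ, M, t₀ and t₁, such that for all s ≥ 1 and all h ∈ [0, M], the function t ↦ (τ/2 − s·α(t)) · (t₀ + t₁ − 2t)/γ(t) is differentiable on (t₀, t₁) and its derivative satisfies |d/dt [(τ/2 − s·α(t)) · (t₀ + t₁ − 2t)/γ(t)]| ≤ C · s · ξ(t)³ for all t ∈ (t₀, t₁). -/

import Mathlib

open Real Set

set_option maxHeartbeats 1000000 in
/-- Property (d) of the Carleman weights: the function
`t ↦ (τ/2 − sα(t)) (t₀ + t₁ − 2t)/γ(t)` is differentiable on `(t₀, t₁)` with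
`|∂_t((τ/2 − sα) ∂_t log γ)| ≤ C s ξ³`, the constant `C` depending only on
`τ, T, λ, M, t₀, t₁`, uniformly in `s ≥ 1` and `h ∈ [0, M]`. -/
theorem stmt7 (T t₀ t₁ : ℝ) (ht₀ : 0 ≤ t₀) (ht : t₀ < t₁) (ht₁ : t₁ ≤ T)
    (lam M : ℝ) (hlam : 1 ≤ lam) (hM : 0 < M)
    (γ : ℝ → ℝ) (ξ α : ℝ → ℝ → ℝ)
    (hγ : ∀ t, γ t = (t - t₀) * (t₁ - t))
    (hξ : ∀ h t, ξ h t = Real.exp (lam * h) / γ t)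
    (hα : ∀ h t, α h t = (Real.exp (2 * lam * M) - Real.exp (lam * h)) / γ t)
    (τ : ℝ) :
    ∃ C > 0, ∀ s ≥ (1 : ℝ), ∀ h, 0 ≤ h → h ≤ M →
      ∀ t ∈ Ioo t₀ t₁,
        DifferentiableAt ℝ (fun t => (τ / 2 - s * α h t) * (t₀ + t₁ - 2 * t) / γ t) t ∧
        |deriv (fun t => (τ / 2 - s * α h t) * (t₀ + t₁ - 2 * t) / γ t) t| ≤
          C * s * (ξ h t) ^ 3 := by
  set L := t₁ - t₀ with hLdef
  have hL0 : 0 < L := sub_pos.mpr ht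
  set E := Real.exp (2 * lam * M) with hEdef
  have hE1 : 1 ≤ E := by
    rw [hEdef]
    have h0 : (0:ℝ) ≤ 2 * lam * M := by nlinarith
    calc (1:ℝ) = Real.exp 0 := by simp
      _ ≤ Real.exp (2 * lam * M) := Real.exp_le_exp.mpr h0
  refine ⟨4 * E * L ^ 2 + |τ| * L ^ 4 + 1, by positivity, ?_⟩
  intro s hs h hh0 hhM t htm
  obtain ⟨ht0', ht1'⟩ := htm
  set A := E - Real.exp (lam * h) with hAdef
  have hexp1 : 1 ≤ Real.exp (lam * h) := by
    have : (0:ℝ) ≤ lam * h := by nlinarith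
    calc (1:ℝ) = Real.exp 0 := by simp
      _ ≤ _ := Real.exp_le_exp.mpr this
  have hA0 : 0 ≤ A := by
    rw [hAdef, hEdef]
    have : lam * h ≤ 2 * lam * M := by nlinarith
    linarith [Real.exp_le_exp.mpr this]
  have hAE : A ≤ E := by
    rw [hAdef]
    linarith
  set u := (t - t₀) * (t₁ - t) with hudef
  have hu0 : 0 < u := mul_pos (sub_pos.mpr ht0') (sub_pos.mpr ht1')
  have hne : u ≠ 0 := ne_of_gt hu0
  set g := t₀ + t₁ - 2 * t with hgdef
  have huL : u ≤ L ^ 2 / 4 := by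
    rw [hudef, hLdef]; nlinarith [sq_nonneg (t - t₀ - (t₁ - t))]
  have hg2 : g ^ 2 ≤ L ^ 2 := by
    rw [hgdef, hLdef]; nlinarith [sub_pos.mpr ht0', sub_pos.mpr ht1']
  have hfun : (fun t => (τ / 2 - s * α h t) * (t₀ + t₁ - 2 * t) / γ t)
      = fun x => (τ / 2 - s * (A / ((x - t₀) * (t₁ - x)))) * (t₀ + t₁ - 2 * x)
          / ((x - t₀) * (t₁ - x)) := by
    funext x
    rw [hα, hγ, hAdef, hEdef]
  have h1 : HasDerivAt (fun x => (x - t₀) * (t₁ - x)) g t := by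
    have h' := (((hasDerivAt_id t).sub_const t₀).mul
      ((hasDerivAt_const t t₁).sub (hasDerivAt_id t)))
    simp only [id_eq] at h'
    exact h'.congr_deriv (by simp; rw [hgdef]; ring)
  have h2 : HasDerivAt (fun x => s * A / ((x - t₀) * (t₁ - x)))
      ((0 * u - s * A * g) / u ^ 2) t := (hasDerivAt_const t (s * A)).div h1 hne
  have h3 : HasDerivAt (fun x => τ / 2 - s * A / ((x - t₀) * (t₁ - x)))
      (0 - (0 * u - s * A * g) / u ^ 2) t := (hasDerivAt_const t (τ / 2)).sub h2
  have h4 : HasDerivAt (fun x => t₀ + t₁ - 2 * x) (-2 : ℝ) t := by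
    have h' := (hasDerivAt_const t (t₀ + t₁)).sub ((hasDerivAt_id t).const_mul 2)
    simp only [id_eq] at h'
    exact h'.congr_deriv (by ring)
  have h5 : HasDerivAt (fun x => (τ / 2 - s * (A / ((x - t₀) * (t₁ - x)))) * (t₀ + t₁ - 2 * x)
      / ((x - t₀) * (t₁ - x)))
      ((((0 - (0 * u - s * A * g) / u ^ 2) * g + (τ / 2 - s * A / u) * (-2)) * u
        - (τ / 2 - s * A / u) * g * g) / u ^ 2) t := by
    have := (h3.mul h4).div h1 hne
    refine this.congr_deriv ?_ |>.congr_of_eventuallyEq ?_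
    · simp [mul_div_assoc]; rw [hudef, hgdef]
    · exact Filter.Eventually.of_forall (fun x => by simp [mul_div_assoc])
  constructor
  · rw [hfun]; exact h5.differentiableAt
  · rw [hfun, h5.deriv, hξ, hγ t, ← hudef]
    have hDval : (((0 - (0 * u - s * A * g) / u ^ 2) * g + (τ / 2 - s * A / u) * (-2)) * u
        - (τ / 2 - s * A / u) * g * g) / u ^ 2
        = (s * A * (2 * g ^ 2 + 2 * u) - (τ / 2) * (2 * u + g ^ 2) * u) / u ^ 3 := by
      field_simp
      ring
    have hRHS : (4 * E * L ^ 2 + |τ| * L ^ 4 + 1) * s * (Real.exp (lam * h) / u) ^ 3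
        = ((4 * E * L ^ 2 + |τ| * L ^ 4 + 1) * s * Real.exp (lam * h) ^ 3) / u ^ 3 := by
      rw [div_pow]; ring
    rw [hDval, hRHS, abs_div, abs_of_pos (pow_pos hu0 3)]
    clear_value L E A u g
    clear hfun h1 h2 h3 h4 h5 hDval hRHS
    have hs0 : (0:ℝ) < s := lt_of_lt_of_le one_pos hs
    have hgu0 : (0:ℝ) ≤ 2 * g ^ 2 + 2 * u := by nlinarith [sq_nonneg g]
    have hsum1 : 2 * g ^ 2 + 2 * u ≤ 3 * L ^ 2 := by nlinarith
    have hsum2 : (0:ℝ) ≤ 2 * u + g ^ 2 := by nlinarith [sq_nonneg g]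
    have hsum3 : 2 * u + g ^ 2 ≤ 3 / 2 * L ^ 2 := by nlinarith
    have hterm1 : |s * A * (2 * g ^ 2 + 2 * u)| ≤ 3 * E * L ^ 2 * s := by
      rw [abs_of_nonneg (mul_nonneg (mul_nonneg hs0.le hA0) hgu0)]
      have hSA : s * A ≤ s * E := mul_le_mul_of_nonneg_left hAE hs0.le
      calc s * A * (2 * g ^ 2 + 2 * u) ≤ s * E * (3 * L ^ 2) :=
            mul_le_mul hSA hsum1 hgu0 (by positivity)
        _ = 3 * E * L ^ 2 * s := by ring
    have hterm2 : |(τ / 2) * (2 * u + g ^ 2) * u| ≤ |τ| * L ^ 4 := by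
      rw [abs_mul, abs_mul, abs_of_pos hu0, abs_of_nonneg hsum2]
      have hτ2 : |τ / 2| = |τ| / 2 := by
        rw [abs_div]; norm_num
      rw [hτ2]
      have hprod : (2 * u + g ^ 2) * u ≤ (3 / 2 * L ^ 2) * (L ^ 2 / 4) :=
        mul_le_mul hsum3 huL hu0.le (by positivity)
      have hstep : |τ| / 2 * (2 * u + g ^ 2) * u ≤ |τ| / 2 * (3 / 2 * L ^ 2) * (L ^ 2 / 4) :=
        mul_le_mul (mul_le_mul_of_nonneg_left hsum3 (by positivity)) huL hu0.le
          (by positivity)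
      have heq : |τ| / 2 * (3 / 2 * L ^ 2) * (L ^ 2 / 4) = 3 / 16 * (|τ| * L ^ 4) := by ring
      have hnn : 0 ≤ |τ| * L ^ 4 := mul_nonneg (abs_nonneg τ) (pow_nonneg hL0.le 4)
      linarith
    have hnum : |s * A * (2 * g ^ 2 + 2 * u) - (τ / 2) * (2 * u + g ^ 2) * u|
        ≤ (4 * E * L ^ 2 + |τ| * L ^ 4 + 1) * s := by
      calc |s * A * (2 * g ^ 2 + 2 * u) - (τ / 2) * (2 * u + g ^ 2) * u|
          ≤ |s * A * (2 * g ^ 2 + 2 * u)| + |(τ / 2) * (2 * u + g ^ 2) * u| := abs_sub _ _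
        _ ≤ 3 * E * L ^ 2 * s + |τ| * L ^ 4 := add_le_add hterm1 hterm2
        _ ≤ (4 * E * L ^ 2 + |τ| * L ^ 4 + 1) * s := by
            nlinarith [mul_nonneg (abs_nonneg τ) (pow_nonneg hL0.le 4),
              mul_pos (mul_pos (lt_of_lt_of_le one_pos hE1) (pow_pos hL0 2)) hs0]
    gcongr
    calc |s * A * (2 * g ^ 2 + 2 * u) - (τ / 2) * (2 * u + g ^ 2) * u|
        ≤ (4 * E * L ^ 2 + |τ| * L ^ 4 + 1) * s := hnum
      _ ≤ (4 * E * L ^ 2 + |τ| * L ^ 4 + 1) * s * Real.exp (lam * h) ^ 3 := by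
          have h3 : (1:ℝ) ≤ Real.exp (lam * h) ^ 3 := by
            calc (1:ℝ) = 1 ^ 3 := by norm_num
              _ ≤ Real.exp (lam * h) ^ 3 := pow_le_pow_left₀ zero_le_one hexp1 3
          have hC : (0:ℝ) ≤ (4 * E * L ^ 2 + |τ| * L ^ 4 + 1) * s := by positivity
          nlinarith [mul_le_mul_of_nonneg_left h3 hC]
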